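/- Let λ ∈ (0,1) and θ ∈ (0,∞) with θ ≠ 1/2 and θ ≠ 1. Let c be the unique zero of f(c) = (c/((2θ−1+2cθ)(2−2θ−c(2θ−1))))^((1−θ)/(θ−1/2)) − (2θ−1+2cθ)²/(1−λ) in I(θ), set s̄ = (c/((2θ−1+2cθ)(2−2θ−c(2θ−1))))^(1/(2θ−1)), and define g(s) = (−cs + (2θ−1+2cθ)s^(2θ))/(s − (2−2θ−c(2θ−1))s^(2θ)). Then g satisfies the smooth-pasting boundary conditions g(1) = 1, g'(1) = 1, g(s̄) = (1−λ)s̄, and g'(s̄) = 1−λ. -/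

import Mathlib

open Real

/-- The interval `I(θ)` in which the root `c` of `f` is located. -/
noncomputable def noTradeInterval (θ : ℝ) : Set ℝ :=
  if θ < 1/2 then Set.Ioi ((1 - θ)/θ)
  else if θ < 1 then Set.Ioo ((1 - θ)/θ) ((1 - θ)/(θ - 1/2))
  else Set.Ioo ((1 - θ)/θ) 0

set_option maxHeartbeats 1600000 in
theorem growth_optimal_g_smooth_pasting
    (lam θ c sbar : ℝ) (g : ℝ → ℝ)
    (hlam : lam ∈ Set.Ioo (0:ℝ) 1) (hθ : 0 < θ) (hθhalf : θ ≠ 1/2) (hθone : θ ≠ 1)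
    (hcI : c ∈ noTradeInterval θ)
    (hfc : (c / ((2*θ - 1 + 2*c*θ) * (2 - 2*θ - c*(2*θ - 1)))) ^ ((1 - θ)/(θ - 1/2))
        - (2*θ - 1 + 2*c*θ)^2 / (1 - lam) = 0)
    (hsbar : sbar = (c / ((2*θ - 1 + 2*c*θ) * (2 - 2*θ - c*(2*θ - 1)))) ^ (1/(2*θ - 1)))
    (hg : ∀ s : ℝ, g s = (-c*s + (2*θ - 1 + 2*c*θ) * s ^ (2*θ))
        / (s - (2 - 2*θ - c*(2*θ - 1)) * s ^ (2*θ))) :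
    g 1 = 1 ∧ deriv g 1 = 1 ∧ g sbar = (1 - lam) * sbar ∧ deriv g sbar = 1 - lam := by
  obtain ⟨hlam0, hlam1⟩ := hlam
  have hθ2 : (2*θ - 1) ≠ 0 := fun h => hθhalf (by linarith)
  -- case analysis on the interval
  have key : 0 < 1 + c ∧ 0 < 2*θ - 1 + 2*c*θ ∧ 0 < c * (2 - 2*θ - c*(2*θ - 1)) := by
    simp only [noTradeInterval] at hcI
    split_ifs at hcI with h1 h2
    · have hlt : (1 - θ)/θ < c := hcI
      have h' : 1 - θ < c * θ := (div_lt_iff₀ hθ).mp hlt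
      have hc : 0 < c := lt_of_lt_of_le (div_pos (by linarith) hθ) hlt.le
      refine ⟨by nlinarith, by nlinarith, mul_pos hc (by nlinarith)⟩
    · obtain ⟨hlt, hub⟩ := hcI
      have hθh : 1/2 < θ := lt_of_le_of_ne (not_lt.mp h1) (Ne.symm hθhalf)
      have h' : 1 - θ < c * θ := (div_lt_iff₀ hθ).mp hlt
      have hc : 0 < c := lt_of_lt_of_le (div_pos (by linarith) hθ) hlt.le
      have h'' : c * (θ - 1/2) < 1 - θ := (lt_div_iff₀ (by linarith)).mp hub
      refine ⟨by nlinarith, by nlinarith, mul_pos hc (by nlinarith)⟩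
    · obtain ⟨hlt, hc0⟩ := hcI
      have hθ1 : 1 < θ := lt_of_le_of_ne (not_lt.mp h2) (Ne.symm hθone)
      have h' : 1 - θ < c * θ := (div_lt_iff₀ hθ).mp hlt
      have hb : 2 - 2*θ - c*(2*θ - 1) < 0 := by nlinarith
      exact ⟨by nlinarith, by nlinarith, mul_pos_of_neg_of_neg hc0 hb⟩
  obtain ⟨hc1, ha, hcb⟩ := key
  have hane : (2*θ - 1 + 2*c*θ) ≠ 0 := ha.ne'
  have hbne : (2 - 2*θ - c*(2*θ - 1)) ≠ 0 := by
    intro h; rw [h, mul_zero] at hcb; exact lt_irrefl 0 hcb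
  have hcne : c ≠ 0 := by
    intro h; rw [h, zero_mul] at hcb; exact lt_irrefl 0 hcb
  have hX : 0 < c / ((2*θ - 1 + 2*c*θ) * (2 - 2*θ - c*(2*θ - 1))) := by
    rcases mul_pos_iff.mp hcb with ⟨hc, hb⟩ | ⟨hc, hb⟩
    · exact div_pos hc (mul_pos ha hb)
    · rw [div_pos_iff]; right; exact ⟨hc, mul_neg_of_pos_of_neg ha hb⟩
  have hs : 0 < sbar := by rw [hsbar]; exact Real.rpow_pos_of_pos hX _
  have hxpow : sbar ^ (2*θ - 1) = c / ((2*θ - 1 + 2*c*θ) * (2 - 2*θ - c*(2*θ - 1))) := by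
    rw [hsbar, ← Real.rpow_mul hX.le, one_div, inv_mul_cancel₀ hθ2, Real.rpow_one]
  have hpowθ : sbar ^ (2*θ)
      = c / ((2*θ - 1 + 2*c*θ) * (2 - 2*θ - c*(2*θ - 1))) * sbar := by
    have h := Real.rpow_add_one hs.ne' (2*θ - 1)
    rw [sub_add_cancel, hxpow] at h
    exact h
  have hlamne : (0:ℝ) < 1 - lam := by linarith
  -- from f(c) = 0 : (1-lam) * sbar = a*c/b
  have hexp : (1 - θ)/(θ - 1/2) = 1/(2*θ - 1) * (2 - 2*θ) := by
    have hθ2' : θ - 1/2 ≠ 0 := fun h => hθhalf (by linarith)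
    rw [one_div_mul_eq_div, div_eq_div_iff hθ2' hθ2]
    ring
  have hfc' : sbar ^ (2 - 2*θ) = (2*θ - 1 + 2*c*θ)^2 / (1 - lam) := by
    rw [hsbar, ← Real.rpow_mul hX.le, ← hexp]
    linarith [hfc]
  have hpow2 : sbar ^ (2 - 2*θ)
      = sbar * ((2*θ - 1 + 2*c*θ) * (2 - 2*θ - c*(2*θ - 1))) / c := by
    rw [eq_div_iff hcne]
    have h := (Real.rpow_add hs (2 - 2*θ) (2*θ - 1)).symm
    rw [hxpow, show (2 - 2*θ) + (2*θ - 1) = (1:ℝ) by ring, Real.rpow_one] at h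
    rw [mul_div_assoc', div_eq_iff (mul_ne_zero hane hbne)] at h
    linear_combination h
  have hlam2 : (1 - lam) * sbar = (2*θ - 1 + 2*c*θ) * c / (2 - 2*θ - c*(2*θ - 1)) := by
    have h := hfc'
    rw [hpow2, div_eq_div_iff hcne hlamne.ne'] at h
    rw [eq_div_iff hbne]
    apply mul_left_cancel₀ hane
    linear_combination h
  have hKne : (2*θ - 1) * (1 + c) ≠ 0 := mul_ne_zero hθ2 hc1.ne'
  -- value at 1
  have hg1 : g 1 = 1 := by
    rw [hg, Real.one_rpow]
    rw [div_eq_one_iff_eq (by intro h; apply hKne; linarith)]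
    ring
  -- denominator value at sbar
  have hXc : (c / ((2*θ - 1 + 2*c*θ) * (2 - 2*θ - c*(2*θ - 1)))) * ((2*θ - 1 + 2*c*θ) * (2 - 2*θ - c*(2*θ - 1))) = c := div_mul_cancel₀ _ (mul_ne_zero hane hbne)
  have hDval : sbar - (2 - 2*θ - c*(2*θ - 1)) *
      (c / ((2*θ - 1 + 2*c*θ) * (2 - 2*θ - c*(2*θ - 1))) * sbar)
      = sbar * ((2*θ - 1) * (1 + c)) / (2*θ - 1 + 2*c*θ) := by
    rw [eq_div_iff hane]
    linear_combination (-sbar) * hXc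
  have hNval : -c * sbar + (2*θ - 1 + 2*c*θ) *
      (c / ((2*θ - 1 + 2*c*θ) * (2 - 2*θ - c*(2*θ - 1))) * sbar)
      = sbar * (c * ((2*θ - 1) * (1 + c))) / (2 - 2*θ - c*(2*θ - 1)) := by
    rw [eq_div_iff hbne]
    linear_combination sbar * hXc
  have hDsne : sbar - (2 - 2*θ - c*(2*θ - 1)) *
      (c / ((2*θ - 1 + 2*c*θ) * (2 - 2*θ - c*(2*θ - 1))) * sbar) ≠ 0 := by
    rw [hDval]
    exact div_ne_zero (mul_ne_zero hs.ne' hKne) hane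
  -- value at sbar
  have hgs : g sbar = (1 - lam) * sbar := by
    rw [hg, hpowθ, hNval, hDval, hlam2]
    rw [div_eq_div_iff (div_ne_zero (mul_ne_zero hs.ne' hKne) hane) hbne]
    rw [div_mul_cancel₀ _ hbne, mul_div_assoc', eq_div_iff hane]
    ring
  -- derivative formula
  have hgfun : g = fun s => (-c*s + (2*θ - 1 + 2*c*θ) * s ^ (2*θ))
      / (s - (2 - 2*θ - c*(2*θ - 1)) * s ^ (2*θ)) := funext hg
  have hderiv : ∀ t : ℝ, 0 < t → (t - (2 - 2*θ - c*(2*θ - 1)) * t ^ (2*θ)) ≠ 0 →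
      deriv g t = ((-c + (2*θ - 1 + 2*c*θ) * (2*θ * t ^ (2*θ - 1)))
          * (t - (2 - 2*θ - c*(2*θ - 1)) * t ^ (2*θ))
        - (-c*t + (2*θ - 1 + 2*c*θ) * t ^ (2*θ))
          * (1 - (2 - 2*θ - c*(2*θ - 1)) * (2*θ * t ^ (2*θ - 1))))
        / (t - (2 - 2*θ - c*(2*θ - 1)) * t ^ (2*θ))^2 := by
    intro t ht hD
    have hr : HasDerivAt (fun s : ℝ => s ^ (2*θ)) (2*θ * t ^ (2*θ - 1)) t :=
      Real.hasDerivAt_rpow_const (Or.inl ht.ne')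
    have h1 : HasDerivAt (fun s : ℝ => -c*s) (-c) t := by
      simpa using (hasDerivAt_id t).const_mul (-c)
    have hN : HasDerivAt (fun s : ℝ => -c*s + (2*θ - 1 + 2*c*θ) * s ^ (2*θ))
        (-c + (2*θ - 1 + 2*c*θ) * (2*θ * t ^ (2*θ - 1))) t :=
      h1.add (hr.const_mul _)
    have hDd : HasDerivAt (fun s : ℝ => s - (2 - 2*θ - c*(2*θ - 1)) * s ^ (2*θ))
        (1 - (2 - 2*θ - c*(2*θ - 1)) * (2*θ * t ^ (2*θ - 1))) t :=
      (hasDerivAt_id t).sub (hr.const_mul _)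
    rw [hgfun]
    exact (hN.div hDd hD).deriv
  -- derivative at 1
  have hD1ne : (1:ℝ) - (2 - 2*θ - c*(2*θ - 1)) * (1:ℝ) ^ (2*θ) ≠ 0 := by
    rw [Real.one_rpow]
    intro h; apply hKne; linarith
  have hd1 : deriv g 1 = 1 := by
    rw [hderiv 1 one_pos hD1ne]
    simp only [Real.one_rpow, mul_one]
    rw [div_eq_one_iff_eq (pow_ne_zero 2 (by rw [Real.one_rpow] at hD1ne; simpa using hD1ne))]
    ring
  -- derivative at sbar
  have hDsne' : (sbar - (2 - 2*θ - c*(2*θ - 1)) * sbar ^ (2*θ)) ≠ 0 := by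
    rw [hpowθ]; exact hDsne
  have hds : deriv g sbar = 1 - lam := by
    have hlam3 : 1 - lam = (2*θ - 1 + 2*c*θ) * c / ((2 - 2*θ - c*(2*θ - 1)) * sbar) := by
      rw [eq_div_iff (mul_ne_zero hbne hs.ne')]
      calc (1 - lam) * ((2 - 2*θ - c*(2*θ - 1)) * sbar)
          = ((1 - lam) * sbar) * (2 - 2*θ - c*(2*θ - 1)) := by ring
        _ = (2*θ - 1 + 2*c*θ) * c := by rw [hlam2]; exact div_mul_cancel₀ _ hbne
    have hN'val : -c + (2*θ - 1 + 2*c*θ)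
        * (2*θ * (c / ((2*θ - 1 + 2*c*θ) * (2 - 2*θ - c*(2*θ - 1)))))
        = c * (2*θ - (2 - 2*θ - c*(2*θ - 1))) / (2 - 2*θ - c*(2*θ - 1)) := by
      rw [eq_div_iff hbne]
      linear_combination (2*θ) * hXc
    have hD'val : 1 - (2 - 2*θ - c*(2*θ - 1))
        * (2*θ * (c / ((2*θ - 1 + 2*c*θ) * (2 - 2*θ - c*(2*θ - 1)))))
        = (2*θ - 1 + 2*c*θ - 2*θ*c) / (2*θ - 1 + 2*c*θ) := by
      rw [eq_div_iff hane]
      linear_combination (-2*θ) * hXc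
    rw [hderiv sbar hs hDsne', hpowθ, hxpow, hN'val, hNval, hDval, hD'val, hlam3]
    rw [div_eq_div_iff (pow_ne_zero 2 (by rw [← hDval]; exact hDsne))
      (mul_ne_zero hbne hs.ne')]
    have hB : (2 - 2*θ - c*(2*θ - 1)) * (2 - 2*θ - c*(2*θ - 1))⁻¹ = 1 := mul_inv_cancel₀ hbne
    have hA : (2*θ - 1 + 2*c*θ) * (2*θ - 1 + 2*c*θ)⁻¹ = 1 := mul_inv_cancel₀ hane
    simp only [div_eq_mul_inv]
    linear_combination (sbar^2 * ((2*θ - 1) * (1 + c)) * c * (2*θ - 1 + 2*c*θ)⁻¹ * ((2*θ - 1) * (1 + c))) * hB - (c * sbar^2 * ((2*θ - 1) * (1 + c))^2 * (2*θ - 1 + 2*c*θ)⁻¹) * hA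
  exact ⟨hg1, hd1, hgs, hds⟩
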